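/- Let G be a finite group and g, h ∈ G non-commuting elements. Then the list 1, g, gh, ghg, ..., (gh)^{k-1}, (gh)^{k-1}g enumerates every element of G exactly once (where k = |G|/2) if and only if the order of gh equals half the order of G. -/

import Mathlib

theorem list_eq_aux {G : Type*} [Group G] (a g : G) (k : ℕ) :
    (List.range k).flatMap (fun i => [a ^ i, a ^ i * g]) =
      (List.range (2 * k)).map (fun n => a ^ (n / 2) * g ^ (n % 2)) := by
  induction k with
  | zero => simp
  | succ k ih =>
    rw [List.range_succ, List.flatMap_append, ih, show 2 * (k+1) = (2*k+1)+1 by ring,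
      List.range_succ, List.range_succ, List.map_append, List.map_append]
    simp [Nat.add_mul_div_left, Nat.mul_div_cancel_left, pow_succ]
    rw [show (2*k+1)/2 = k by omega]

theorem not_mem_zpowers_aux {G : Type*} [Group G] {g h : G} (hcomm : g * h ≠ h * g) :
    g ∉ Subgroup.zpowers (g * h) := by
  intro hmem
  obtain ⟨n, hn⟩ := Subgroup.mem_zpowers_iff.mp hmem
  have hc : (g * h) ^ n * (g * h) = (g * h) * (g * h) ^ n :=
    ((Commute.refl (g * h)).zpow_left n).eq
  rw [hn] at hc
  exact hcomm (mul_left_cancel (by rw [hc, mul_assoc]))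

theorem stmt_2 {G : Type*} [Group G] [Fintype G] (g h : G) (hcomm : g * h ≠ h * g)
    (k : ℕ) (hcard : Fintype.card G = 2 * k) :
    (((List.range k).flatMap (fun i => [(g * h) ^ i, (g * h) ^ i * g])).Nodup ∧
      ∀ x : G, x ∈ (List.range k).flatMap (fun i => [(g * h) ^ i, (g * h) ^ i * g])) ↔
    orderOf (g * h) = Fintype.card G / 2 := by
  classical
  have hk0 : 0 < k := by
    have := Fintype.card_pos (α := G); omega
  have hgz : g ∉ Subgroup.zpowers (g * h) := not_mem_zpowers_aux hcomm
  rw [list_eq_aux, hcard, Nat.mul_div_cancel_left _ (by norm_num)]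
  constructor
  · rintro ⟨hnd, -⟩
    have hinj := List.inj_on_of_nodup_map hnd
    have hle : k ≤ orderOf (g * h) := by
      by_contra hlt
      push_neg at hlt
      have h0 : (0:ℕ) ∈ List.range (2 * k) := by simp; omega
      have h1 : 2 * orderOf (g * h) ∈ List.range (2 * k) := by simp; omega
      have := hinj h0 h1 (by
        simp [Nat.mul_div_cancel_left, pow_orderOf_eq_one])
      have hpos : 0 < orderOf (g * h) := orderOf_pos _
      omega
    have hdvd : orderOf (g * h) ∣ 2 * k := hcard ▸ orderOf_dvd_card
    have hne : orderOf (g * h) ≠ 2 * k := by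
      intro heq
      apply hgz
      have htop : Subgroup.zpowers (g * h) = ⊤ := by
        apply Subgroup.eq_top_of_card_eq
        rw [Nat.card_zpowers, heq, Nat.card_eq_fintype_card, hcard]
      rw [htop]; trivial
    obtain ⟨c, hc⟩ := hdvd
    have hc2 : c ≤ 2 := by nlinarith
    interval_cases c <;> omega
  · intro hord
    have hnd : (List.map (fun n => (g * h) ^ (n / 2) * g ^ (n % 2))
        (List.range (2 * k))).Nodup := by
      refine List.Nodup.map_on ?_ List.nodup_range
      intro m hm n hn heq
      simp only [List.mem_range] at hm hn
      have hm2 : m / 2 < orderOf (g * h) := by omega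
      have hn2 : n / 2 < orderOf (g * h) := by omega
      rcases Nat.mod_two_eq_zero_or_one m with h1 | h1 <;>
        rcases Nat.mod_two_eq_zero_or_one n with h2 | h2 <;>
        rw [h1, h2] at heq
      · simp only [pow_zero, mul_one] at heq
        have := pow_injOn_Iio_orderOf hm2 hn2 heq
        omega
      · exfalso; apply hgz
        simp only [pow_zero, pow_one, mul_one] at heq
        have hg' : g = ((g*h) ^ (n/2))⁻¹ * (g*h) ^ (m/2) := by
          rw [heq]; group
        have hmem : ((g*h) ^ (n/2))⁻¹ * (g*h) ^ (m/2) ∈ Subgroup.zpowers (g*h) :=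
          Subgroup.mul_mem _ (Subgroup.inv_mem _ (Subgroup.pow_mem _
            (Subgroup.mem_zpowers _) _)) (Subgroup.pow_mem _ (Subgroup.mem_zpowers _) _)
        rwa [← hg'] at hmem
      · exfalso; apply hgz
        simp only [pow_zero, pow_one, mul_one] at heq
        have hg' : g = ((g*h) ^ (m/2))⁻¹ * (g*h) ^ (n/2) := by
          rw [← heq]; group
        have hmem : ((g*h) ^ (m/2))⁻¹ * (g*h) ^ (n/2) ∈ Subgroup.zpowers (g*h) :=
          Subgroup.mul_mem _ (Subgroup.inv_mem _ (Subgroup.pow_mem _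
            (Subgroup.mem_zpowers _) _)) (Subgroup.pow_mem _ (Subgroup.mem_zpowers _) _)
        rwa [← hg'] at hmem
      · simp only [pow_one] at heq
        have heq' := mul_right_cancel heq
        have := pow_injOn_Iio_orderOf hm2 hn2 heq'
        omega
    refine ⟨hnd, ?_⟩
    intro x
    have hlen : (List.map (fun n => (g * h) ^ (n / 2) * g ^ (n % 2))
        (List.range (2 * k))).length = Fintype.card G := by
      simp [hcard]
    have huniv : (List.map (fun n => (g * h) ^ (n / 2) * g ^ (n % 2))
        (List.range (2 * k))).toFinset = Finset.univ := by
      apply Finset.eq_univ_of_card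
      rw [List.toFinset_card_of_nodup hnd, hlen]
    have hx : x ∈ (List.map (fun n => (g * h) ^ (n / 2) * g ^ (n % 2))
        (List.range (2 * k))).toFinset := by rw [huniv]; exact Finset.mem_univ x
    exact List.mem_toFinset.mp hx
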